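/- Let ≺ be a structured linear order on the vertices of T_φ whose extracted assignment falsifies at least one clause of φ. Then the feedback arc set implied by ≺ has size at least n·s₁² + (3n−1)m·s₁·s₂ + s₁·s₂. -/

import Mathlib

/-! ### The tournament `T_φ` of the reduction

A CNF formula `φ` with variables `x_1, …, x_n` and clauses `c_1, …, c_m` in which no
variable occurs twice in a clause is given by its occurrence function
`occ : Fin n → Fin m → Option Bool`, where `occ i j = some true` (resp. `some false`)
means `x_i` occurs positively (resp. negatively) in `c_j`, and `none` means `x_i`
does not occur in `c_j`. -/

/-- The names of the `6n + m` modules of the tournament `T_φ`. -/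
inductive ModName (n m : ℕ) : Type where
  | A : Fin n → ModName n m
  | B : Fin n → ModName n m
  | C : Fin n → ModName n m
  | D : Fin n → ModName n m
  | E : Fin n → ModName n m
  | F : Fin n → ModName n m
  | T : Fin m → ModName n m
  deriving DecidableEq, Fintype

/-- The group (variable index) of a module, if it is a variable module. -/
def grp? {n m : ℕ} : ModName n m → Option (Fin n)
  | .A i => some i
  | .B i => some i
  | .C i => some i
  | .D i => some i
  | .E i => some i
  | .F i => some i
  | .T _ => none

/-- The clause index of a module, if it is a clause module. -/
def clause? {n m : ℕ} : ModName n m → Option (Fin m)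
  | .T j => some j
  | _ => none

/-- The rank of a module within its group: `A = 0, B = 1, C = 2, D = 3, E = 4, F = 5`. -/
def rk {n m : ℕ} : ModName n m → ℕ
  | .A _ => 0
  | .B _ => 1
  | .C _ => 2
  | .D _ => 3
  | .E _ => 4
  | .F _ => 5
  | .T _ => 6

/-- The size of each module: `A_i, B_i, C_i, D_i, F_i` have size `s₁`; `E_i` has size
`s₁ + 2` for `i < n` and `s₁ + 3` for `i = n` (i.e. index `n - 1`); `T_j` has size `s₂`. -/
def msize (n m s₁ s₂ : ℕ) : ModName n m → ℕ
  | .A _ => s₁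
  | .B _ => s₁
  | .C _ => s₁
  | .D _ => s₁
  | .E i => if (i : ℕ) = n - 1 then s₁ + 3 else s₁ + 2
  | .F _ => s₁
  | .T _ => s₂

/-- The vertex set of `T_φ`: a vertex is a module name together with an index inside
the module. -/
abbrev Vtx (n m s₁ s₂ : ℕ) : Type := Σ M : ModName n m, Fin (msize n m s₁ s₂ M)

/-- Whether all arcs go from `T_j` to the variable module of rank `r` of a group `i`
with `occ i j = o`: if `x_i` does not occur in `c_j`, `T_j` beats `A_i ∪ B_i ∪ C_i`
(ranks 0,1,2); if positively, `T_j` beats `A_i ∪ B_i ∪ F_i` (ranks 0,1,5); if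
negatively, `T_j` beats `A_i ∪ C_i ∪ D_i` (ranks 0,2,3). -/
def tBeats : Option Bool → ℕ → Prop
  | none, r => r = 0 ∨ r = 1 ∨ r = 2
  | some true, r => r = 0 ∨ r = 1 ∨ r = 5
  | some false, r => r = 0 ∨ r = 2 ∨ r = 3

/-- The direction of the arcs between two distinct modules of `T_φ`. -/
def modArc {n m : ℕ} (occ : Fin n → Fin m → Option Bool) (M M' : ModName n m) : Prop :=
  (∃ i i' : Fin n, grp? M = some i ∧ grp? M' = some i' ∧
    (i < i' ∨ (i = i' ∧ ((rk M < rk M' ∧ ¬(rk M = 3 ∧ rk M' = 5)) ∨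
      (rk M = 5 ∧ rk M' = 3))))) ∨
  (∃ j j' : Fin m, clause? M = some j ∧ clause? M' = some j' ∧ j < j') ∨
  (∃ j : Fin m, ∃ i : Fin n, clause? M = some j ∧ grp? M' = some i ∧
    tBeats (occ i j) (rk M')) ∨
  (∃ i : Fin n, ∃ j : Fin m, grp? M = some i ∧ clause? M' = some j ∧
    ¬ tBeats (occ i j) (rk M))

/-- The arc relation of the tournament `T_φ`: inside a module, arcs follow the
transitive order of the indices; between distinct modules, arcs are given by `modArc`. -/
def arc {n m s₁ s₂ : ℕ} (occ : Fin n → Fin m → Option Bool) :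
    Vtx n m s₁ s₂ → Vtx n m s₁ s₂ → Prop :=
  fun u v => (u.1 = v.1 ∧ (u.2 : ℕ) < (v.2 : ℕ)) ∨ (u.1 ≠ v.1 ∧ modArc occ u.1 v.1)

/-- The set of vertices of a module. -/
def mset {n m s₁ s₂ : ℕ} (M : ModName n m) : Set (Vtx n m s₁ s₂) := {v | v.1 = M}

/-- The set of vertices of group `i`: `A_i ∪ B_i ∪ C_i ∪ D_i ∪ E_i ∪ F_i`. -/
def gset {n m s₁ s₂ : ℕ} (i : Fin n) : Set (Vtx n m s₁ s₂) := {v | grp? v.1 = some i}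

/-- The sink of the transitive tournament induced by the module `F_n`. -/
def fnSink (n m s₁ s₂ : ℕ) (hn : 0 < n) (hs₁ : 0 < s₁) : Vtx n m s₁ s₂ :=
  ⟨.F ⟨n - 1, Nat.sub_lt hn one_pos⟩, ⟨s₁ - 1, Nat.sub_lt hs₁ one_pos⟩⟩

/-- The feedback arc set implied by an ordering `r`. -/
def fasSet {V : Type*} (A r : V → V → Prop) : Set (V × V) := {p | A p.1 p.2 ∧ r p.2 p.1}

/-- `r` is an optimal ordering: a strict linear order whose implied feedback arc set
has minimum size. -/
def IsOptimalOrder {V : Type*} (A r : V → V → Prop) : Prop :=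
  IsStrictTotalOrder V r ∧
    ∀ r' : V → V → Prop, IsStrictTotalOrder V r' → (fasSet A r).ncard ≤ (fasSet A r').ncard

/-- `r` places `v` last. -/
def PlacesLast {V : Type*} (r : V → V → Prop) (v : V) : Prop := ∀ u, u ≠ v → r u v

/-- `v` is a Slater winner: some optimal order places `v` last. -/
def SlaterWinner {V : Type*} (A : V → V → Prop) (v : V) : Prop :=
  ∃ r : V → V → Prop, IsOptimalOrder A r ∧ PlacesLast r v

/-- The assignment `σ` satisfies clause `c_j`. -/
def SatClause {n m : ℕ} (occ : Fin n → Fin m → Option Bool) (σ : Fin n → Bool)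
    (j : Fin m) : Prop :=
  ∃ i : Fin n, (occ i j = some true ∧ σ i = true) ∨ (occ i j = some false ∧ σ i = false)

/-- The assignment `σ` satisfies `φ`. -/
def Sat {n m : ℕ} (occ : Fin n → Fin m → Option Bool) (σ : Fin n → Bool) : Prop :=
  ∀ j : Fin m, SatClause occ σ j

/-- The weight of a truth assignment: the number of variables set to `true`. -/
def wt {n : ℕ} (σ : Fin n → Bool) : ℕ := (Finset.univ.filter (fun i => σ i = true)).card

/-- Every element of `S` comes before every element of `S'` in the order `r`. -/
def Before {V : Type*} (r : V → V → Prop) (S S' : Set V) : Prop := ∀ u ∈ S, ∀ v ∈ S', r u v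

/-- `S` is contiguous in the ordering `r`. -/
def Contig {V : Type*} (r : V → V → Prop) (S : Set V) : Prop :=
  ¬ ∃ x ∈ S, ∃ y ∈ S, ∃ z, z ∉ S ∧ r x z ∧ r z y

/-- A linear order on the vertices of `T_φ` is structured if every module is contiguous,
groups appear in increasing order, within each group `A_i ≺ B_i ≺ C_i` come before
`D_i ∪ E_i ∪ F_i`, and the last three modules appear in one of the cyclic orders
`D_i ≺ E_i ≺ F_i`, `E_i ≺ F_i ≺ D_i`, `F_i ≺ D_i ≺ E_i`. -/
def Structured {n m s₁ s₂ : ℕ} (r : Vtx n m s₁ s₂ → Vtx n m s₁ s₂ → Prop) : Prop :=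
  (∀ M : ModName n m, Contig r (mset M)) ∧
  (∀ i i' : Fin n, i < i' → Before r (gset i) (gset i')) ∧
  (∀ i : Fin n,
    Before r (mset (.A i)) (mset (.B i)) ∧
    Before r (mset (.B i)) (mset (.C i)) ∧
    Before r (mset (.A i) ∪ mset (.B i) ∪ mset (.C i))
      (mset (.D i) ∪ mset (.E i) ∪ mset (.F i))) ∧
  (∀ i : Fin n,
    (Before r (mset (.D i)) (mset (.E i)) ∧ Before r (mset (.E i)) (mset (.F i))) ∨
    (Before r (mset (.E i)) (mset (.F i)) ∧ Before r (mset (.F i)) (mset (.D i))) ∨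
    (Before r (mset (.F i)) (mset (.D i)) ∧ Before r (mset (.D i)) (mset (.E i))))

/-- `σ` is the assignment extracted from the structured order `r`: `x_i` is set to true
iff `D_i ≺ E_i ≺ F_i`. -/
def Extracted {n m s₁ s₂ : ℕ} (r : Vtx n m s₁ s₂ → Vtx n m s₁ s₂ → Prop)
    (σ : Fin n → Bool) : Prop :=
  ∀ i : Fin n, σ i = true ↔
    (Before r (mset (.D i)) (mset (.E i)) ∧ Before r (mset (.E i)) (mset (.F i)))

-- basic model defs & decide lemmas
section Aux
open Finset

instance tBeats.dec : ∀ (o : Option Bool) (r : ℕ), Decidable (tBeats o r) := by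
  rintro (_|_|_) r <;> · unfold tBeats; infer_instance

/-- abstract rank sequence of the six modules of a group in a structured order -/
def ordRk (c : Fin 3) (t : ℕ) : ℕ := if t < 3 then t else 3 + ((t - 3 + (c : ℕ)) % 3)

def litSat (o : Option Bool) (c : Fin 3) : Prop :=
  (o = some true ∧ c = 0) ∨ (o = some false ∧ c ≠ 0)

instance : ∀ o c, Decidable (litSat o c) := fun o c => by unfold litSat; infer_instance

def cnt (o : Option Bool) (c : Fin 3) (k : ℕ) : ℕ :=
  (Finset.univ.filter fun t : Fin 6 =>
    ((t : ℕ) < k ∧ tBeats o (ordRk c (t : ℕ))) ∨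
    (k ≤ (t : ℕ) ∧ ¬ tBeats o (ordRk c (t : ℕ)))).card

lemma cnt_ge2 : ∀ (o : Option Bool) (c : Fin 3) (k : Fin 7), 2 ≤ cnt o c (k : ℕ) := by decide

lemma cnt_ge3 : ∀ (o : Option Bool) (c : Fin 3) (k : Fin 7),
    (¬ litSat o c ∨ (k : ℕ) = 0 ∨ (k : ℕ) = 6) → 3 ≤ cnt o c (k : ℕ) := by decide

lemma lowerSet_mem_iff : ∀ S : Finset (Fin 6),
    (∀ t ∈ S, ∀ t' ≤ t, t' ∈ S) → ∀ t : Fin 6, (t ∈ S ↔ (t : ℕ) < S.card) := by decide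

end Aux
section Aux2
variable {n m s₁ s₂ : ℕ}

def modOfRk (i : Fin n) : ℕ → ModName n m
  | 0 => .A i | 1 => .B i | 2 => .C i | 3 => .D i | 4 => .E i | _ => .F i

lemma grp?_modOfRk (i : Fin n) (x : ℕ) : grp? (modOfRk (m := m) i x) = some i := by
  rcases x with _|_|_|_|_|_ <;> rfl

lemma clause?_modOfRk (i : Fin n) (x : ℕ) : clause? (modOfRk (m := m) i x) = none := by
  rcases x with _|_|_|_|_|_ <;> rfl

lemma rk_modOfRk (i : Fin n) {x : ℕ} (h : x < 6) : rk (modOfRk (m := m) i x) = x := by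
  interval_cases x <;> rfl

lemma ordRk_lt (c : Fin 3) {t : ℕ} (h : t < 6) : ordRk c t < 6 := by
  unfold ordRk; split <;> omega

lemma modOfRk_ne_T (i : Fin n) (x : ℕ) (j : Fin m) : modOfRk i x ≠ .T j := by
  rcases x with _|_|_|_|_|_ <;> simp [modOfRk]

lemma msize_pos (hs₁ : 0 < s₁) (hs₂ : 0 < s₂) (M : ModName n m) : 0 < msize n m s₁ s₂ M := by
  cases M <;> simp [msize] <;> first | omega | (split <;> omega)

lemma s₁_le_msize_modOfRk (i : Fin n) (x : ℕ) : s₁ ≤ msize n m s₁ s₂ (modOfRk i x) := by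
  rcases x with _|_|_|_|_|_ <;> simp [modOfRk, msize] <;> split <;> omega

lemma mset_nonempty (hs₁ : 0 < s₁) (hs₂ : 0 < s₂) (M : ModName n m) :
    (mset (s₁ := s₁) (s₂ := s₂) M).Nonempty :=
  ⟨⟨M, ⟨0, msize_pos hs₁ hs₂ M⟩⟩, rfl⟩

variable {r : Vtx n m s₁ s₂ → Vtx n m s₁ s₂ → Prop}

lemma before_mono {S S' T T' : Set (Vtx n m s₁ s₂)} (h : Before r S S')
    (hT : T ⊆ S) (hT' : T' ⊆ S') : Before r T T' :=
  fun u hu v hv => h u (hT hu) v (hT' hv)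

lemma before_trans (hr : IsStrictTotalOrder _ r) {S S' S'' : Set (Vtx n m s₁ s₂)}
    (h : Before r S S') (h' : Before r S' S'') (hne : S'.Nonempty) : Before r S S'' := by
  obtain ⟨w, hw⟩ := hne
  exact fun u hu v hv => hr.trans u w v (h u hu w hw) (h' w hw v hv)

lemma mset_ne_disjoint {M M' : ModName n m} (h : M ≠ M') {v : Vtx n m s₁ s₂}
    (hv : v ∈ mset (s₁ := s₁) (s₂ := s₂) M) : v ∉ mset (s₁ := s₁) (s₂ := s₂) M' := by
  intro hv'; exact h (hv ▸ hv' ▸ rfl)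

lemma before_or_before (hr : IsStrictTotalOrder _ r)
    (hc : ∀ M : ModName n m, Contig r (mset (s₁ := s₁) (s₂ := s₂) M))
    {M M' : ModName n m} (h : M ≠ M') :
    Before r (mset M) (mset M') ∨ Before r (mset (s₁ := s₁) (s₂ := s₂) M') (mset M) := by
  by_contra hcon
  push_neg at hcon
  obtain ⟨h1, h2⟩ := hcon
  simp only [Before, not_forall] at h1 h2
  obtain ⟨u, hu, v, hv, huv⟩ := h1
  obtain ⟨v', hv', u', hu', hvu'⟩ := h2
  simp only [mset, Set.mem_setOf_eq] at hu hv hu' hv'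
  have hne1 : v ≠ u := fun he => h (by rw [← hu, ← he, hv])
  have hvu : r v u := by
    rcases (by haveI := hr; exact trichotomous_of r v u) with hh | hh | hh
    · exact hh
    · exact absurd hh hne1
    · exact absurd hh huv
  have hne2 : u' ≠ v' := fun he => h (by rw [← hu', he, hv'])
  have hu'v' : r u' v' := by
    rcases (by haveI := hr; exact trichotomous_of r u' v') with hh | hh | hh
    · exact hh
    · exact absurd hh hne2
    · exact absurd hh hvu'
  rcases (by haveI := hr; exact trichotomous_of r u' v) with hh | hh | hh
  · exact hc M ⟨u', hu', u, hu, v, by simp [mset, hv, Ne.symm h], hh, hvu⟩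
  · exact h (by rw [← hu', hh, hv])
  · exact hc M' ⟨v, hv, v', hv', u', by simp [mset, hu', h], hh, hu'v'⟩

end Aux2
section Aux3
variable {n m s₁ s₂ : ℕ}

open Classical in
noncomputable def cOf (r : Vtx n m s₁ s₂ → Vtx n m s₁ s₂ → Prop) (i : Fin n) : Fin 3 :=
  if Before r (mset (.D i)) (mset (.E i)) ∧ Before r (mset (.E i)) (mset (.F i)) then 0
  else if Before r (mset (.E i)) (mset (.F i)) ∧ Before r (mset (.F i)) (mset (.D i)) then 1
  else 2

variable {r : Vtx n m s₁ s₂ → Vtx n m s₁ s₂ → Prop}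

lemma cOf_zero_iff {i : Fin n} : cOf r i = 0 ↔
    (Before r (mset (.D i)) (mset (.E i)) ∧ Before r (mset (.E i)) (mset (.F i))) := by
  unfold cOf; split_ifs with h1 h2 <;> simp_all

lemma cOf_one {i : Fin n} (h : cOf r i = 1) :
    Before r (mset (.E i)) (mset (.F i)) ∧ Before r (mset (.F i)) (mset (.D i)) := by
  unfold cOf at h; split_ifs at h with h1 h2 <;> simp_all

lemma cOf_two {i : Fin n} (hstr : Structured r) (h : cOf r i = 2) :
    Before r (mset (.F i)) (mset (.D i)) ∧ Before r (mset (.D i)) (mset (.E i)) := by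
  unfold cOf at h; split_ifs at h with h1 h2
  · simp_all
  · simp_all
  · rcases hstr.2.2.2 i with h' | h' | h' <;> tauto

noncomputable def seqMod (r : Vtx n m s₁ s₂ → Vtx n m s₁ s₂ → Prop) (i : Fin n) (x : ℕ) :
    ModName n m :=
  modOfRk i (ordRk (cOf r i) x)

lemma seq_cons (hstr : Structured r) (i : Fin n) :
    ∀ x : ℕ, x + 1 < 6 → Before r (mset (seqMod r i x)) (mset (seqMod r i (x + 1))) := by
  obtain ⟨hcontig, hgrp, habc, hdef⟩ := hstr
  obtain ⟨hAB, hBC, hABC⟩ := habc i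
  have hsubC : (mset (.C i) : Set (Vtx n m s₁ s₂)) ⊆
      mset (.A i) ∪ mset (.B i) ∪ mset (.C i) := fun v hv => Or.inr hv
  have hCD : Before r (mset (s₁ := s₁) (s₂ := s₂) (.C i)) (mset (.D i)) :=
    before_mono hABC hsubC (fun v hv => Or.inl (Or.inl hv))
  have hCE : Before r (mset (s₁ := s₁) (s₂ := s₂) (.C i)) (mset (.E i)) :=
    before_mono hABC hsubC (fun v hv => Or.inl (Or.inr hv))
  have hCF : Before r (mset (s₁ := s₁) (s₂ := s₂) (.C i)) (mset (.F i)) :=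
    before_mono hABC hsubC (fun v hv => Or.inr hv)
  rcases (show ∀ x : Fin 3, x = 0 ∨ x = 1 ∨ x = 2 by decide) (cOf r i) with hc | hc | hc
  · obtain ⟨hDE, hEF⟩ := cOf_zero_iff.mp hc
    intro x hx; have hx5 : x < 5 := by omega
    interval_cases x
    · simp only [seqMod, hc]; exact hAB
    · simp only [seqMod, hc]; exact hBC
    · simp only [seqMod, hc]; exact hCD
    · simp only [seqMod, hc]; exact hDE
    · simp only [seqMod, hc]; exact hEF
  · obtain ⟨hEF, hFD⟩ := cOf_one hc
    intro x hx; have hx5 : x < 5 := by omega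
    interval_cases x
    · simp only [seqMod, hc]; exact hAB
    · simp only [seqMod, hc]; exact hBC
    · simp only [seqMod, hc]; exact hCE
    · simp only [seqMod, hc]; exact hEF
    · simp only [seqMod, hc]; exact hFD
  · obtain ⟨hFD, hDE⟩ := cOf_two ⟨hcontig, hgrp, habc, hdef⟩ hc
    intro x hx; have hx5 : x < 5 := by omega
    interval_cases x
    · simp only [seqMod, hc]; exact hAB
    · simp only [seqMod, hc]; exact hBC
    · simp only [seqMod, hc]; exact hCF
    · simp only [seqMod, hc]; exact hFD
    · simp only [seqMod, hc]; exact hDE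

lemma seq_chain (hr : IsStrictTotalOrder _ r) (hs₁ : 0 < s₁) (hs₂ : 0 < s₂)
    (hstr : Structured r) (i : Fin n) :
    ∀ y x : ℕ, y < 6 → x < y → Before r (mset (seqMod r i x)) (mset (seqMod r i y)) := by
  have hcons := seq_cons hstr i
  intro y
  induction y with
  | zero => omega
  | succ y ih =>
    intro x hy hx
    rcases Nat.lt_or_ge x y with h | h
    · exact before_trans hr (ih x (by omega) h) (hcons y hy)
        (mset_nonempty hs₁ hs₂ _)
    · have hxy : x = y := by omega
      subst hxy; exact hcons x hy

end Aux3
section Aux4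
variable {n m s₁ s₂ : ℕ}

def mfin (M : ModName n m) : Finset (Vtx n m s₁ s₂) := Finset.univ.filter (fun v => v.1 = M)

lemma card_mfin (M : ModName n m) : (mfin (s₁ := s₁) (s₂ := s₂) M).card = msize n m s₁ s₂ M := by
  have he : (mfin (s₁ := s₁) (s₂ := s₂) M) =
      Finset.univ.image (fun x : Fin (msize n m s₁ s₂ M) => (⟨M, x⟩ : Vtx n m s₁ s₂)) := by
    ext v
    simp only [mfin, Finset.mem_filter, Finset.mem_univ, true_and, Finset.mem_image]
    constructor
    · obtain ⟨M', x⟩ := v; rintro rfl; exact ⟨x, rfl⟩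
    · rintro ⟨x, rfl⟩; rfl
  rw [he, Finset.card_image_of_injective _ (fun a b h => by simpa using h)]
  simp

def pf (P : ModName n m × ModName n m) : Finset (Vtx n m s₁ s₂ × Vtx n m s₁ s₂) :=
  (mfin P.1) ×ˢ (mfin P.2)

lemma card_pf (P : ModName n m × ModName n m) :
    (pf (s₁ := s₁) (s₂ := s₂) P).card = msize n m s₁ s₂ P.1 * msize n m s₁ s₂ P.2 := by
  rw [pf, Finset.card_product, card_mfin, card_mfin]

lemma pf_disj {P P' : ModName n m × ModName n m} (h : P ≠ P') :
    Disjoint (pf (s₁ := s₁) (s₂ := s₂) P) (pf (s₁ := s₁) (s₂ := s₂) P') := by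
  rw [Finset.disjoint_left]
  rintro ⟨u, v⟩ hp hp'
  simp only [pf, Finset.mem_product, mfin, Finset.mem_filter, Finset.mem_univ, true_and] at hp hp'
  exact h (Prod.ext (by rw [← hp.1, hp'.1]) (by rw [← hp.2, hp'.2]))

lemma pf_sub_fas {occ : Fin n → Fin m → Option Bool}
    {r : Vtx n m s₁ s₂ → Vtx n m s₁ s₂ → Prop} {P : ModName n m × ModName n m}
    (hne : P.1 ≠ P.2) (harc : modArc occ P.1 P.2)
    (hbef : Before r (mset P.2) (mset P.1)) :
    ∀ p ∈ pf (s₁ := s₁) (s₂ := s₂) P, p ∈ fasSet (arc occ) r := by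
  rintro ⟨u, v⟩ hp
  simp only [pf, Finset.mem_product, mfin, Finset.mem_filter, Finset.mem_univ, true_and] at hp
  obtain ⟨hu, hv⟩ := hp
  exact ⟨Or.inr ⟨by rw [hu, hv]; exact hne, by rw [hu, hv]; exact harc⟩, hbef v hv u hu⟩

variable {r : Vtx n m s₁ s₂ → Vtx n m s₁ s₂ → Prop}

lemma ordRk_inj (c : Fin 3) {a b : ℕ} (ha : a < 6) (hb : b < 6)
    (h : ordRk c a = ordRk c b) : a = b := by
  unfold ordRk at h; have hc := c.isLt; split_ifs at h <;> omega

lemma seq_inj {i : Fin n} {a b : ℕ} (ha : a < 6) (hb : b < 6)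
    (h : seqMod (m := m) r i a = seqMod r i b) : a = b := by
  have h2 := congrArg rk h
  simp only [seqMod] at h2
  rw [rk_modOfRk _ (ordRk_lt _ ha), rk_modOfRk _ (ordRk_lt _ hb)] at h2
  exact ordRk_inj _ ha hb h2

open Classical in
noncomputable def Sfin (r : Vtx n m s₁ s₂ → Vtx n m s₁ s₂ → Prop) (j : Fin m) (i : Fin n) :
    Finset (Fin 6) :=
  Finset.univ.filter (fun t => Before r (mset (seqMod r i (t : ℕ))) (mset (.T j)))

noncomputable def kk (r : Vtx n m s₁ s₂ → Vtx n m s₁ s₂ → Prop) (j : Fin m) (i : Fin n) : ℕ :=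
  (Sfin r j i).card

lemma kk_le6 (j : Fin m) (i : Fin n) : kk r j i ≤ 6 :=
  le_trans (Finset.card_le_univ _) (by simp)

lemma mem_Sfin_iff (hr : IsStrictTotalOrder _ r) (hs₁ : 0 < s₁) (hs₂ : 0 < s₂)
    (hstr : Structured r) (j : Fin m) (i : Fin n) (t : Fin 6) :
    t ∈ Sfin r j i ↔ (t : ℕ) < kk r j i := by
  apply lowerSet_mem_iff
  intro t ht t' ht'
  simp only [Sfin, Finset.mem_filter, Finset.mem_univ, true_and] at *
  rcases eq_or_lt_of_le ht' with he | hlt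
  · rwa [he]
  · exact before_trans hr (seq_chain hr hs₁ hs₂ hstr i t t' t.isLt hlt) ht
      (mset_nonempty hs₁ hs₂ _)

lemma before_of_lt_kk (hr : IsStrictTotalOrder _ r) (hs₁ : 0 < s₁) (hs₂ : 0 < s₂)
    (hstr : Structured r) {j : Fin m} {i : Fin n} {t : Fin 6} (h : (t : ℕ) < kk r j i) :
    Before r (mset (seqMod r i (t : ℕ))) (mset (.T j)) := by
  have := (mem_Sfin_iff hr hs₁ hs₂ hstr j i t).mpr h
  simpa [Sfin] using this

lemma after_T (hr : IsStrictTotalOrder _ r) (hs₁ : 0 < s₁) (hs₂ : 0 < s₂)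
    (hstr : Structured r) {j : Fin m} {i : Fin n} {t : Fin 6} (h : ¬ (t : ℕ) < kk r j i) :
    Before r (mset (.T j)) (mset (seqMod r i (t : ℕ))) := by
  rcases before_or_before hr hstr.1
      (show seqMod r i (t : ℕ) ≠ .T j from modOfRk_ne_T i _ j) with hb | hb
  · exact absurd ((mem_Sfin_iff hr hs₁ hs₂ hstr j i t).mp (by simp [Sfin, hb])) h
  · exact hb

open Classical in
noncomputable def chosenIdx (occ : Fin n → Fin m → Option Bool)
    (r : Vtx n m s₁ s₂ → Vtx n m s₁ s₂ → Prop) (j : Fin m) (i : Fin n) : Finset (Fin 6) :=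
  Finset.univ.filter fun t : Fin 6 =>
    ((t : ℕ) < kk r j i ∧ tBeats (occ i j) (ordRk (cOf r i) (t : ℕ))) ∨
    (kk r j i ≤ (t : ℕ) ∧ ¬ tBeats (occ i j) (ordRk (cOf r i) (t : ℕ)))

lemma card_chosenIdx (occ : Fin n → Fin m → Option Bool) (j : Fin m) (i : Fin n) :
    (chosenIdx occ r j i).card = cnt (occ i j) (cOf r i) (kk r j i) := by
  rfl

noncomputable def emb (r : Vtx n m s₁ s₂ → Vtx n m s₁ s₂ → Prop) (j : Fin m) (i : Fin n)
    (t : Fin 6) : ModName n m × ModName n m :=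
  if (t : ℕ) < kk r j i then (.T j, seqMod r i (t : ℕ)) else (seqMod r i (t : ℕ), .T j)

lemma emb_inj (j : Fin m) (i : Fin n) : Function.Injective (emb r j i) := by
  intro a b h
  unfold emb at h
  split_ifs at h with h1 h2 h2
  · exact Fin.ext (seq_inj a.isLt b.isLt (congrArg Prod.snd h))
  · exact absurd (congrArg Prod.fst h).symm (modOfRk_ne_T i _ j)
  · exact absurd (congrArg Prod.fst h) (modOfRk_ne_T i _ j)
  · exact Fin.ext (seq_inj a.isLt b.isLt (congrArg Prod.fst h))

noncomputable def tpairs (occ : Fin n → Fin m → Option Bool)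
    (r : Vtx n m s₁ s₂ → Vtx n m s₁ s₂ → Prop) (j : Fin m) (i : Fin n) :
    Finset (ModName n m × ModName n m) :=
  (chosenIdx occ r j i).image (emb r j i)

lemma mem_tpairs {occ : Fin n → Fin m → Option Bool} {j : Fin m} {i : Fin n}
    {P : ModName n m × ModName n m} (h : P ∈ tpairs occ r j i) :
    (clause? P.1 = some j ∧ grp? P.2 = some i) ∨
    (grp? P.1 = some i ∧ clause? P.2 = some j) := by
  simp only [tpairs, Finset.mem_image] at h
  obtain ⟨t, -, rfl⟩ := h
  unfold emb
  split_ifs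
  · exact Or.inl ⟨rfl, grp?_modOfRk i _⟩
  · exact Or.inr ⟨grp?_modOfRk i _, rfl⟩

lemma not_clause_grp (M : ModName n m) (j : Fin m) (i : Fin n) :
    ¬ (clause? M = some j ∧ grp? M = some i) := by
  cases M <;> simp [clause?, grp?]

lemma tpairs_disj {occ : Fin n → Fin m → Option Bool} {j j' : Fin m} {i i' : Fin n}
    (h : (i, j) ≠ (i', j')) :
    Disjoint (tpairs (s₁ := s₁) (s₂ := s₂) occ r j i) (tpairs occ r j' i') := by
  rw [Finset.disjoint_left]
  intro P hP hP'
  rcases mem_tpairs hP with ⟨hc, hg⟩ | ⟨hg, hc⟩ <;>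
    rcases mem_tpairs hP' with ⟨hc', hg'⟩ | ⟨hg', hc'⟩
  · rw [hc'] at hc; rw [hg'] at hg
    exact h (by simp_all)
  · exact not_clause_grp P.1 j i' ⟨hc, hg'⟩
  · exact not_clause_grp P.1 j' i ⟨hc', hg⟩
  · rw [hc'] at hc; rw [hg'] at hg
    exact h (by simp_all)

noncomputable def dpair (r : Vtx n m s₁ s₂ → Vtx n m s₁ s₂ → Prop) (i : Fin n) :
    ModName n m × ModName n m :=
  (seqMod r i 5, seqMod r i 3)

lemma dpair_inj : Function.Injective (dpair (s₁ := s₁) (s₂ := s₂) r) := by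
  intro a b h
  have := congrArg (fun P => grp? P.1) h
  simpa [dpair, seqMod, grp?_modOfRk] using this

lemma dpair_ne (i : Fin n) : (dpair (s₁ := s₁) (s₂ := s₂) r i).1 ≠ (dpair r i).2 := by
  intro h
  have := seq_inj (r := r) (by omega) (by omega) h
  omega

lemma dpair_arc (occ : Fin n → Fin m → Option Bool) (i : Fin n) :
    modArc occ (dpair (s₁ := s₁) (s₂ := s₂) r i).1 (dpair r i).2 := by
  refine Or.inl ⟨i, i, grp?_modOfRk i _, grp?_modOfRk i _, Or.inr ⟨rfl, ?_⟩⟩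
  rcases (show ∀ x : Fin 3, x = 0 ∨ x = 1 ∨ x = 2 by decide) (cOf r i) with hc | hc | hc <;>
    simp only [dpair, seqMod, hc]
  · exact Or.inr ⟨rfl, rfl⟩
  · rw [rk_modOfRk i (by decide : ordRk (1 : Fin 3) 5 < 6),
        rk_modOfRk i (by decide : ordRk (1 : Fin 3) 3 < 6)]
    exact Or.inl ⟨by decide, by decide⟩
  · rw [rk_modOfRk i (by decide : ordRk (2 : Fin 3) 5 < 6),
        rk_modOfRk i (by decide : ordRk (2 : Fin 3) 3 < 6)]
    exact Or.inl ⟨by decide, by decide⟩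

lemma dpair_before (hr : IsStrictTotalOrder _ r) (hs₁ : 0 < s₁) (hs₂ : 0 < s₂)
    (hstr : Structured r) (i : Fin n) :
    Before r (mset (dpair r i).2) (mset (dpair r i).1) :=
  seq_chain hr hs₁ hs₂ hstr i 5 3 (by omega) (by omega)

end Aux4
section Aux5
variable {n m s₁ s₂ : ℕ} {r : Vtx n m s₁ s₂ → Vtx n m s₁ s₂ → Prop}

lemma tpairs_sub_fas (hr : IsStrictTotalOrder _ r) (hs₁ : 0 < s₁) (hs₂ : 0 < s₂)
    (hstr : Structured r) (occ : Fin n → Fin m → Option Bool) (j : Fin m) (i : Fin n) :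
    ∀ P ∈ tpairs occ r j i, ∀ p ∈ pf P, p ∈ fasSet (arc occ) r := by
  intro P hP
  simp only [tpairs, Finset.mem_image] at hP
  obtain ⟨t, ht, rfl⟩ := hP
  simp only [chosenIdx, Finset.mem_filter, Finset.mem_univ, true_and] at ht
  have hrk : rk (seqMod r i (t : ℕ)) = ordRk (cOf r i) (t : ℕ) :=
    rk_modOfRk i (ordRk_lt _ t.isLt)
  unfold emb
  split_ifs with hlt
  · have hbt : tBeats (occ i j) (ordRk (cOf r i) (t : ℕ)) := by
      rcases ht with ⟨-, h⟩ | ⟨h2, -⟩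
      · exact h
      · omega
    apply pf_sub_fas
    · exact fun h => (modOfRk_ne_T i _ j) h.symm
    · refine Or.inr (Or.inr (Or.inl ⟨j, i, rfl, grp?_modOfRk i _, ?_⟩))
      rw [show rk (seqMod r i (t : ℕ)) = ordRk (cOf r i) (t : ℕ) from hrk]
      exact hbt
    · exact before_of_lt_kk hr hs₁ hs₂ hstr hlt
  · have hbt : ¬ tBeats (occ i j) (ordRk (cOf r i) (t : ℕ)) := by
      rcases ht with ⟨h2, -⟩ | ⟨-, h⟩
      · omega
      · exact h
    apply pf_sub_fas
    · exact modOfRk_ne_T i _ j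
    · refine Or.inr (Or.inr (Or.inr ⟨i, j, grp?_modOfRk i _, rfl, ?_⟩))
      rw [show rk (seqMod r i (t : ℕ)) = ordRk (cOf r i) (t : ℕ) from hrk]
      exact hbt
    · exact after_T hr hs₁ hs₂ hstr hlt

end Aux5

/-- If a structured order's extracted assignment falsifies some clause of `φ`, then its
implied feedback arc set has size at least `n·s₁² + (3n−1)m·s₁·s₂ + s₁·s₂`. -/
theorem stmt13 (n m s₁ s₂ : ℕ) (hn : 0 < n) (hm : 0 < m) (hs₁ : 0 < s₁) (hs₂ : 0 < s₂)
    (occ : Fin n → Fin m → Option Bool)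
    (h3lit : ∀ j : Fin m, ({i : Fin n | occ i j ≠ none}).ncard ≤ 3)
    (hallF : ∀ j : Fin m, ∃ i : Fin n, occ i j = some false)
    (r : Vtx n m s₁ s₂ → Vtx n m s₁ s₂ → Prop) (hr : IsStrictTotalOrder (Vtx n m s₁ s₂) r)
    (hstr : Structured r)
    (σ : Fin n → Bool) (hσ : Extracted r σ)
    (hfals : ∃ j : Fin m, ¬ SatClause occ σ j) :
    n * s₁ ^ 2 + (3 * n - 1) * m * s₁ * s₂ + s₁ * s₂ ≤ (fasSet (arc occ) r).ncard := by
  classical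
  obtain ⟨j₀, hj₀⟩ := hfals
  have hfin : (fasSet (arc occ) r).Finite := Set.toFinite _
  set PF : ModName n m × ModName n m → Finset (Vtx n m s₁ s₂ × Vtx n m s₁ s₂) :=
    fun P => pf P with hPF
  set DCh : Finset (ModName n m × ModName n m) :=
    Finset.univ.image (fun i => dpair r i) with hDCh
  set TCh : Finset (ModName n m × ModName n m) :=
    Finset.univ.biUnion (fun q : Fin n × Fin m => tpairs occ r q.2 q.1) with hTCh
  -- every chosen block lies in the fas
  have hChFas : ∀ P ∈ DCh ∪ TCh, ∀ p ∈ PF P, p ∈ fasSet (arc occ) r := by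
    intro P hP
    rcases Finset.mem_union.mp hP with hP | hP
    · obtain ⟨i, -, rfl⟩ := Finset.mem_image.mp hP
      exact pf_sub_fas (dpair_ne i) (dpair_arc occ i) (dpair_before hr hs₁ hs₂ hstr i)
    · obtain ⟨q, -, hq⟩ := Finset.mem_biUnion.mp hP
      exact tpairs_sub_fas hr hs₁ hs₂ hstr occ q.2 q.1 P hq
  have hsub : (DCh ∪ TCh).biUnion PF ⊆ hfin.toFinset := by
    intro p hp
    rw [Set.Finite.mem_toFinset]
    obtain ⟨P, hP, hpP⟩ := Finset.mem_biUnion.mp hp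
    exact hChFas P hP p hpP
  have hcard : ((DCh ∪ TCh).biUnion PF).card = ∑ P ∈ DCh ∪ TCh, (PF P).card :=
    Finset.card_biUnion (fun P _ P' _ h => pf_disj h)
  have hDTdisj : Disjoint DCh TCh := by
    rw [Finset.disjoint_left]
    intro P hP hP'
    obtain ⟨i, -, rfl⟩ := Finset.mem_image.mp hP
    obtain ⟨q, -, hq⟩ := Finset.mem_biUnion.mp hP'
    rcases mem_tpairs hq with ⟨hc, -⟩ | ⟨-, hc⟩ <;>
      simp [dpair, seqMod, clause?_modOfRk] at hc
  have hsum : ∑ P ∈ DCh ∪ TCh, (PF P).card =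
      ∑ P ∈ DCh, (PF P).card + ∑ P ∈ TCh, (PF P).card :=
    Finset.sum_union hDTdisj
  -- lower bound for the variable-group part
  have hD : n * s₁ ^ 2 ≤ ∑ P ∈ DCh, (PF P).card := by
    rw [hDCh, Finset.sum_image (fun a _ b _ h => dpair_inj h)]
    calc n * s₁ ^ 2 = ∑ _i : Fin n, s₁ ^ 2 := by simp [mul_comm]
      _ ≤ ∑ i, (PF (dpair r i)).card := by
          refine Finset.sum_le_sum (fun i _ => ?_)
          rw [card_pf, sq]
          exact Nat.mul_le_mul (s₁_le_msize_modOfRk i _) (s₁_le_msize_modOfRk i _)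
  -- lower bound for the clause part, block by block
  have hT : ∀ q : Fin n × Fin m,
      (chosenIdx occ r q.2 q.1).card * (s₁ * s₂) ≤ ∑ P ∈ tpairs occ r q.2 q.1, (PF P).card := by
    intro q
    rw [tpairs, Finset.sum_image (fun a _ b _ h => emb_inj q.2 q.1 h)]
    calc (chosenIdx occ r q.2 q.1).card * (s₁ * s₂)
        = ∑ _t ∈ chosenIdx occ r q.2 q.1, (s₁ * s₂) := by
          rw [Finset.sum_const, smul_eq_mul]
      _ ≤ ∑ t ∈ chosenIdx occ r q.2 q.1, (PF (emb r q.2 q.1 t)).card := by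
          refine Finset.sum_le_sum (fun t _ => ?_)
          unfold emb
          split_ifs
          · rw [card_pf, show msize n m s₁ s₂ (ModName.T q.2) = s₂ from rfl, mul_comm s₂ _]
            exact Nat.mul_le_mul (s₁_le_msize_modOfRk q.1 _) le_rfl
          · rw [card_pf, show msize n m s₁ s₂ (ModName.T q.2) = s₂ from rfl]
            exact Nat.mul_le_mul (s₁_le_msize_modOfRk q.1 _) le_rfl
  have hTsum : (∑ q : Fin n × Fin m, (chosenIdx occ r q.2 q.1).card) * (s₁ * s₂) ≤
      ∑ P ∈ TCh, (PF P).card := by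
    rw [hTCh, Finset.sum_biUnion (fun q _ q' _ hne => tpairs_disj (by simpa using hne))]
    rw [Finset.sum_mul]
    exact Finset.sum_le_sum (fun q _ => hT q)
  -- counting lower bounds per (i, j)
  have hcnt2 : ∀ (j : Fin m) (i : Fin n), 2 ≤ (chosenIdx occ r j i).card := by
    intro j i
    rw [card_chosenIdx]
    have hk := kk_le6 (r := r) j i
    exact cnt_ge2 (occ i j) (cOf r i) ⟨kk r j i, by omega⟩
  have hcnt3 : ∀ (j : Fin m) (i : Fin n),
      (¬ litSat (occ i j) (cOf r i) ∨ kk r j i = 0 ∨ kk r j i = 6) →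
      3 ≤ (chosenIdx occ r j i).card := by
    intro j i h
    rw [card_chosenIdx]
    have hk := kk_le6 (r := r) j i
    exact cnt_ge3 (occ i j) (cOf r i) ⟨kk r j i, by omega⟩ h
  have huniq : ∀ (j : Fin m) (i i' : Fin n), i < i' →
      kk r j i < 6 → 0 < kk r j i' → False := by
    intro j i i' hlt h6 h0
    have h5 : ¬ ((5 : Fin 6) : ℕ) < kk r j i := by
      rw [show ((5 : Fin 6) : ℕ) = 5 from rfl]; omega
    have hb1 : Before r (mset (.T j)) (mset (seqMod r i 5)) := after_T hr hs₁ hs₂ hstr h5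
    have hb2 : Before r (mset (seqMod r i' 0)) (mset (.T j)) :=
      before_of_lt_kk hr hs₁ hs₂ hstr (t := (0 : Fin 6))
        (by rw [show ((0 : Fin 6) : ℕ) = 0 from rfl]; omega)
    obtain ⟨b, hbmem⟩ := mset_nonempty hs₁ hs₂ (seqMod r i 5)
    obtain ⟨a, hamem⟩ := mset_nonempty hs₁ hs₂ (seqMod r i' 0)
    obtain ⟨tt, httmem⟩ := mset_nonempty hs₁ hs₂ (.T j)
    have h1 : r tt b := hb1 tt httmem b hbmem
    have h2 : r b a := hstr.2.1 i i' hlt b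
      (show grp? b.1 = some i by rw [show b.1 = _ from hbmem]; exact grp?_modOfRk i _) a
      (show grp? a.1 = some i' by rw [show a.1 = _ from hamem]; exact grp?_modOfRk i' _)
    have h3 : r a tt := hb2 a hamem tt httmem
    exact hr.irrefl tt (hr.trans _ _ _ h1 (hr.trans _ _ _ h2 h3))
  have hsplit : ∀ (j : Fin m) (i : Fin n), (chosenIdx occ r j i).card < 3 →
      0 < kk r j i ∧ kk r j i < 6 := by
    intro j i hlt
    by_contra hcon
    have hk := kk_le6 (r := r) j i
    have : kk r j i = 0 ∨ kk r j i = 6 := by omega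
    exact absurd (hcnt3 j i (Or.inr this)) (by omega)
  have hperj : ∀ j : Fin m, 3 * n - 1 ≤ ∑ i : Fin n, (chosenIdx occ r j i).card := by
    intro j
    by_cases hall : ∀ i, 3 ≤ (chosenIdx occ r j i).card
    · have h3n : 3 * n ≤ ∑ i : Fin n, (chosenIdx occ r j i).card := by
        have := Finset.card_nsmul_le_sum Finset.univ
          (fun i => (chosenIdx occ r j i).card) 3 (fun i _ => hall i)
        rwa [smul_eq_mul, Finset.card_univ, Fintype.card_fin, mul_comm] at this
      omega
    · push_neg at hall
      obtain ⟨i₀, hi₀⟩ := hall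
      have hothers : ∀ i ∈ Finset.univ.erase i₀, 3 ≤ (chosenIdx occ r j i).card := by
        intro i hi
        by_contra hlt
        push_neg at hlt
        have hs0 := hsplit j i₀ hi₀
        have hs1 := hsplit j i hlt
        have hne : i ≠ i₀ := (Finset.mem_erase.mp hi).1
        rcases lt_or_gt_of_ne hne with h | h
        · exact huniq j i i₀ h hs1.2 hs0.1
        · exact huniq j i₀ i h hs0.2 hs1.1
      have h1 : ∑ i : Fin n, (chosenIdx occ r j i).card =
          (chosenIdx occ r j i₀).card + ∑ i ∈ Finset.univ.erase i₀, (chosenIdx occ r j i).card :=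
        (Finset.add_sum_erase _ _ (Finset.mem_univ i₀)).symm
      have h2 : (n - 1) * 3 ≤ ∑ i ∈ Finset.univ.erase i₀, (chosenIdx occ r j i).card := by
        have := Finset.card_nsmul_le_sum (Finset.univ.erase i₀)
          (fun i => (chosenIdx occ r j i).card) 3 hothers
        rwa [smul_eq_mul, Finset.card_erase_of_mem (Finset.mem_univ i₀), Finset.card_univ,
          Fintype.card_fin] at this
      have h0 : 2 ≤ (chosenIdx occ r j i₀).card := hcnt2 j i₀
      omega
  have hperj0 : 3 * n ≤ ∑ i : Fin n, (chosenIdx occ r j₀ i).card := by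
    have hall : ∀ i, 3 ≤ (chosenIdx occ r j₀ i).card := by
      intro i
      apply hcnt3
      left
      intro hls
      rcases hls with ⟨ho, hc⟩ | ⟨ho, hc⟩
      · exact hj₀ ⟨i, Or.inl ⟨ho, (hσ i).mpr (cOf_zero_iff.mp hc)⟩⟩
      · have hσi : σ i ≠ true := fun ht => hc (cOf_zero_iff.mpr ((hσ i).mp ht))
        exact hj₀ ⟨i, Or.inr ⟨ho, by simpa using hσi⟩⟩
    have := Finset.card_nsmul_le_sum Finset.univ
      (fun i => (chosenIdx occ r j₀ i).card) 3 (fun i _ => hall i)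
    rwa [smul_eq_mul, Finset.card_univ, Fintype.card_fin, mul_comm] at this
  have htot : (3 * n - 1) * m + 1 ≤ ∑ j : Fin m, ∑ i : Fin n, (chosenIdx occ r j i).card := by
    have h1 : ∑ j : Fin m, ∑ i : Fin n, (chosenIdx occ r j i).card =
        (∑ i : Fin n, (chosenIdx occ r j₀ i).card) +
        ∑ j ∈ Finset.univ.erase j₀, ∑ i : Fin n, (chosenIdx occ r j i).card :=
      (Finset.add_sum_erase _ _ (Finset.mem_univ j₀)).symm
    have h2 : (m - 1) * (3 * n - 1) ≤
        ∑ j ∈ Finset.univ.erase j₀, ∑ i : Fin n, (chosenIdx occ r j i).card := by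
      have := Finset.card_nsmul_le_sum (Finset.univ.erase j₀)
        (fun j => ∑ i : Fin n, (chosenIdx occ r j i).card) (3 * n - 1) (fun j _ => hperj j)
      rwa [smul_eq_mul, Finset.card_erase_of_mem (Finset.mem_univ j₀), Finset.card_univ,
        Fintype.card_fin] at this
    have harith : (3 * n - 1) * m + 1 ≤ 3 * n + (m - 1) * (3 * n - 1) := by
      obtain ⟨m', rfl⟩ : ∃ m', m = m' + 1 := ⟨m - 1, by omega⟩
      obtain ⟨a, ha⟩ : ∃ a, 3 * n = a + 1 := ⟨3 * n - 1, by omega⟩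
      have ha' : 3 * n - 1 = a := by omega
      rw [ha', ha, Nat.add_sub_cancel]
      exact le_of_eq (by ring)
    calc (3 * n - 1) * m + 1 ≤ 3 * n + (m - 1) * (3 * n - 1) := harith
      _ ≤ (∑ i : Fin n, (chosenIdx occ r j₀ i).card) +
          ∑ j ∈ Finset.univ.erase j₀, ∑ i : Fin n, (chosenIdx occ r j i).card :=
        Nat.add_le_add hperj0 h2
      _ = _ := h1.symm
  have hTtotal : ((3 * n - 1) * m + 1) * (s₁ * s₂) ≤ ∑ P ∈ TCh, (PF P).card := by
    refine le_trans (Nat.mul_le_mul_right _ ?_) hTsum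
    calc (3 * n - 1) * m + 1 ≤ ∑ j : Fin m, ∑ i : Fin n, (chosenIdx occ r j i).card := htot
      _ = ∑ i : Fin n, ∑ j : Fin m, (chosenIdx occ r j i).card := Finset.sum_comm
      _ = ∑ q : Fin n × Fin m, (chosenIdx occ r q.2 q.1).card := by
          rw [Fintype.sum_prod_type]
  have hmain : n * s₁ ^ 2 + ((3 * n - 1) * m + 1) * (s₁ * s₂) ≤ hfin.toFinset.card := by
    calc n * s₁ ^ 2 + ((3 * n - 1) * m + 1) * (s₁ * s₂)
        ≤ ∑ P ∈ DCh, (PF P).card + ∑ P ∈ TCh, (PF P).card := Nat.add_le_add hD hTtotal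
      _ = ∑ P ∈ DCh ∪ TCh, (PF P).card := hsum.symm
      _ = ((DCh ∪ TCh).biUnion PF).card := hcard.symm
      _ ≤ hfin.toFinset.card := Finset.card_le_card hsub
  rw [Set.ncard_eq_toFinset_card _ hfin]
  calc n * s₁ ^ 2 + (3 * n - 1) * m * s₁ * s₂ + s₁ * s₂
      = n * s₁ ^ 2 + ((3 * n - 1) * m + 1) * (s₁ * s₂) := by ring
    _ ≤ hfin.toFinset.card := hmain
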